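/- Let 𝓐 ⊆ B(H) be a unital operator algebra closed in the weak operator topology that possesses property (V), and let x, y ∈ H be unit vectors. Then there exists T ∈ 𝓐 with ‖T‖ ≤ 1 and Tx = y if and only if ‖(I−L)y‖ ≤ ‖(I−L)x‖ for every L ∈ Lat 𝓐. -/

import Mathlib

noncomputable section

variable {H : Type*} [NormedAddCommGroup H] [InnerProductSpace ℂ H] [CompleteSpace H]

/-- An orthogonal projection: a self-adjoint idempotent bounded operator. -/
def IsOrthoProj (L : H →L[ℂ] H) : Prop := IsSelfAdjoint L ∧ L * L = L

/-- The weak operator topology on `B(H)`. -/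
def WOT (H : Type*) [NormedAddCommGroup H] [InnerProductSpace ℂ H] :
    TopologicalSpace (H →L[ℂ] H) :=
  TopologicalSpace.induced
    (fun T : H →L[ℂ] H => fun p : H × H => (inner ℂ (T p.1) p.2 : ℂ)) inferInstance

/-- `Lat 𝓐`: the invariant projection lattice of a set of operators. -/
def latOf (𝓐 : Set (H →L[ℂ] H)) : Set (H →L[ℂ] H) :=
  {L | IsOrthoProj L ∧ ∀ T ∈ 𝓐, (1 - L) * T * L = 0}

/-- `‖ω_{x,y}|_𝓐‖ = sup {|⟨Tx, y⟩| : T ∈ 𝓐, ‖T‖ ≤ 1}`. -/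
def omegaNorm (𝓐 : Set (H →L[ℂ] H)) (x y : H) : ℝ :=
  sSup {r : ℝ | ∃ T ∈ 𝓐, ‖T‖ ≤ 1 ∧ r = ‖(inner ℂ (T x) y : ℂ)‖}

/-- Property (V) of a set of operators. -/
def PropertyV (𝓐 : Set (H →L[ℂ] H)) : Prop :=
  ∀ x y : H,
    sInf {r : ℝ | ∃ L ∈ latOf 𝓐, r = ‖x - L x‖ ^ 2 + ‖L y‖ ^ 2} ≤ omegaNorm 𝓐 x y

open Filter Topology ContinuousLinearMap

local notation "⟪" x ", " y "⟫" => @inner ℂ _ _ x y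

lemma IsOrthoProj.inner_self_aux {L : H →L[ℂ] H} (hL : IsOrthoProj L) (z : H) :
    ⟪L z, L z⟫ = ⟪z, L z⟫ := by
  have hadj : ContinuousLinearMap.adjoint L = L := by
    rw [← ContinuousLinearMap.star_eq_adjoint]; exact hL.1
  have h2 : L (L z) = L z := by
    have := congrFun (congrArg DFunLike.coe hL.2) z
    simpa [ContinuousLinearMap.mul_apply] using this
  calc ⟪L z, L z⟫ = ⟪ContinuousLinearMap.adjoint L z, L z⟫ := by rw [hadj]
    _ = ⟪z, L (L z)⟫ := ContinuousLinearMap.adjoint_inner_left L (L z) z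
    _ = ⟪z, L z⟫ := by rw [h2]

lemma IsOrthoProj.norm_apply_le {L : H →L[ℂ] H} (hL : IsOrthoProj L) (z : H) :
    ‖L z‖ ≤ ‖z‖ := by
  have h := hL.inner_self_aux z
  have h1 : (‖L z‖ : ℝ) ^ 2 = Complex.re ⟪z, L z⟫ := by
    rw [← h]; exact (inner_self_eq_norm_sq (𝕜 := ℂ) (L z)).symm
  have h2 : Complex.re ⟪z, L z⟫ ≤ ‖⟪z, L z⟫‖ := Complex.re_le_norm _
  have h3 : ‖⟪z, L z⟫‖ ≤ ‖z‖ * ‖L z‖ := norm_inner_le_norm _ _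
  nlinarith [norm_nonneg (L z), norm_nonneg z]

lemma IsOrthoProj.pyth {L : H →L[ℂ] H} (hL : IsOrthoProj L) (z : H) :
    ‖z - L z‖ ^ 2 + ‖L z‖ ^ 2 = ‖z‖ ^ 2 := by
  have horth : ⟪z - L z, L z⟫ = 0 := by
    rw [inner_sub_left, sub_eq_zero, ← hL.inner_self_aux z]
  have hval := norm_add_sq (𝕜 := ℂ) (z - L z) (L z)
  rw [sub_add_cancel, horth] at hval
  simp at hval
  linarith

/-- WOT ultrafilter limit of a bounded sequence of operators. -/
lemma exists_wotLimit (T : ℕ → H →L[ℂ] H) (hT : ∀ n, ‖T n‖ ≤ 1) (𝒰 : Ultrafilter ℕ) :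
    ∃ S : H →L[ℂ] H, ‖S‖ ≤ 1 ∧
      ∀ u v : H, Tendsto (fun n => (⟪T n u, v⟫ : ℂ)) (𝒰 : Filter ℕ) (𝓝 ⟪S u, v⟫) := by
  have key : ∀ u v : H, ∃ c : ℂ, ‖c‖ ≤ ‖u‖ * ‖v‖ ∧
      Tendsto (fun n => (⟪T n u, v⟫ : ℂ)) (𝒰 : Filter ℕ) (𝓝 c) := by
    intro u v
    have hb : ∀ n, (⟪T n u, v⟫ : ℂ) ∈ Metric.closedBall (0 : ℂ) (‖u‖ * ‖v‖) := by
      intro n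
      rw [Metric.mem_closedBall, dist_zero_right]
      calc ‖(⟪T n u, v⟫ : ℂ)‖ ≤ ‖T n u‖ * ‖v‖ := norm_inner_le_norm _ _
        _ ≤ ‖u‖ * ‖v‖ := by
            have h1 : ‖T n u‖ ≤ ‖u‖ := by
              calc ‖T n u‖ ≤ ‖T n‖ * ‖u‖ := (T n).le_opNorm u
                _ ≤ 1 * ‖u‖ := mul_le_mul_of_nonneg_right (hT n) (norm_nonneg u)
                _ = ‖u‖ := one_mul _
            exact mul_le_mul_of_nonneg_right h1 (norm_nonneg v)
    obtain ⟨c, hc, hle⟩ := (isCompact_closedBall (0 : ℂ) (‖u‖ * ‖v‖)).ultrafilter_le_nhds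
      (𝒰.map fun n => (⟪T n u, v⟫ : ℂ))
      (by rw [Ultrafilter.coe_map, le_principal_iff]; exact Filter.mem_map.mpr (univ_mem' hb))
    refine ⟨c, Metric.mem_closedBall.mp hc |>.trans_eq' (dist_zero_right c), ?_⟩
    rwa [Ultrafilter.coe_map] at hle
  choose φ hφn hφt using key
  let lin : H → (H →L[ℂ] ℂ) := fun u => LinearMap.mkContinuous
    { toFun := φ u
      map_add' := fun v w => tendsto_nhds_unique (hφt u (v + w))
        (((hφt u v).add (hφt u w)).congr fun n => (inner_add_right _ _ _).symm)
      map_smul' := fun a v => tendsto_nhds_unique (hφt u (a • v))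
        (((hφt u v).const_mul a).congr fun n => (inner_smul_right _ _ _).symm) }
    ‖u‖ (fun v => hφn u v)
  have hlin_apply : ∀ u v, lin u v = φ u v := fun u v => rfl
  have hlin_norm : ∀ u, ‖lin u‖ ≤ ‖u‖ := fun u =>
    LinearMap.mkContinuous_norm_le _ (norm_nonneg u) _
  let Sfun : H → H := fun u => (InnerProductSpace.toDual ℂ H).symm (lin u)
  have hSf : ∀ u v, ⟪Sfun u, v⟫ = φ u v := fun u v =>
    InnerProductSpace.toDual_symm_apply
  have hSadd : ∀ u w, Sfun (u + w) = Sfun u + Sfun w := by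
    intro u w
    apply ext_inner_right ℂ
    intro v
    rw [hSf, inner_add_left, hSf, hSf]
    exact tendsto_nhds_unique (hφt (u + w) v)
      (((hφt u v).add (hφt w v)).congr fun n => by rw [← inner_add_left, ← map_add])
  have hSsmul : ∀ (a : ℂ) u, Sfun (a • u) = a • Sfun u := by
    intro a u
    apply ext_inner_right ℂ
    intro v
    rw [hSf, inner_smul_left, hSf]
    exact tendsto_nhds_unique (hφt (a • u) v)
      (((hφt u v).const_mul ((starRingEnd ℂ) a)).congr fun n => by
        rw [map_smul, inner_smul_left])
  have hSnorm : ∀ u, ‖Sfun u‖ ≤ ‖u‖ := by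
    intro u
    have h1 : ‖Sfun u‖ = ‖lin u‖ := LinearIsometryEquiv.norm_map _ _
    rw [h1]; exact hlin_norm u
  refine ⟨LinearMap.mkContinuous
    { toFun := Sfun, map_add' := hSadd, map_smul' := hSsmul } 1
    (fun u => by simpa using hSnorm u),
    LinearMap.mkContinuous_norm_le _ zero_le_one _, fun u v => ?_⟩
  have : ⟪(LinearMap.mkContinuous
      { toFun := Sfun, map_add' := hSadd, map_smul' := hSsmul } 1
      (fun u => by simpa using hSnorm u) : H →L[ℂ] H) u, v⟫ = φ u v := hSf u v
  rw [this]
  exact hφt u v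

/-- For a WOT-closed unital operator algebra `𝓐` possessing property
(V) and unit vectors `x, y ∈ H`, there exists a contraction `T ∈ 𝓐` with `T x = y` if
and only if `‖(I−L)y‖ ≤ ‖(I−L)x‖` for every `L ∈ Lat 𝓐`. -/
theorem norms_of_vector_functionals_stmt13
    (𝓐 : Subalgebra ℂ (H →L[ℂ] H))
    (hclosed : @IsClosed _ (WOT H) (𝓐 : Set (H →L[ℂ] H)))
    (hV : PropertyV (𝓐 : Set (H →L[ℂ] H)))
    (x y : H) (hx : ‖x‖ = 1) (hy : ‖y‖ = 1) :
    (∃ T ∈ 𝓐, ‖T‖ ≤ 1 ∧ T x = y) ↔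
      ∀ L ∈ latOf (𝓐 : Set (H →L[ℂ] H)), ‖y - L y‖ ≤ ‖x - L x‖ := by
  constructor
  · rintro ⟨T, hTmem, hTnorm, hTx⟩ L hL
    obtain ⟨⟨hLsa, hLsq⟩, hinv⟩ := hL
    have h0 : (1 - L) * T * L = 0 := hinv T hTmem
    have hproj : IsOrthoProj (1 - L) := by
      constructor
      · rw [IsSelfAdjoint, star_sub, star_one, hLsa.star_eq]
      · have : (1 - L) * (1 - L) = 1 - L - L + L * L := by noncomm_ring
        rw [this, hLsq]; abel
    have hop : (1 - L) * T = (1 - L) * T * (1 - L) := by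
      have h1 : (1 - L) * T * (1 - L) = (1 - L) * T - (1 - L) * T * L := by noncomm_ring
      rw [h1, h0, sub_zero]
    have key : y - L y = (1 - L) (T (x - L x)) := by
      have e1 : y - L y = ((1 - L) * T) x := by
        rw [ContinuousLinearMap.mul_apply, hTx]
        simp [ContinuousLinearMap.sub_apply]
      have e2 : ((1 - L) * T) x = ((1 - L) * T * (1 - L)) x := by rw [← hop]
      rw [e1, e2]
      simp [ContinuousLinearMap.mul_apply, ContinuousLinearMap.sub_apply]
    calc ‖y - L y‖ = ‖(1 - L) (T (x - L x))‖ := by rw [key]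
      _ ≤ ‖T (x - L x)‖ := hproj.norm_apply_le _
      _ ≤ ‖T‖ * ‖x - L x‖ := T.le_opNorm _
      _ ≤ 1 * ‖x - L x‖ := mul_le_mul_of_nonneg_right hTnorm (norm_nonneg _)
      _ = ‖x - L x‖ := one_mul _
  · intro h
    -- Step 1: the omega norm is at least 1
    have h0lat : (0 : H →L[ℂ] H) ∈ latOf (𝓐 : Set (H →L[ℂ] H)) :=
      ⟨⟨.zero _, by simp⟩, fun T _ => by simp⟩
    have hInf : (1 : ℝ) ≤ sInf {r : ℝ | ∃ L ∈ latOf (𝓐 : Set (H →L[ℂ] H)),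
        r = ‖x - L x‖ ^ 2 + ‖L y‖ ^ 2} := by
      refine le_csInf ⟨_, ⟨0, h0lat, rfl⟩⟩ ?_
      rintro r ⟨L, hL, rfl⟩
      have hp : ‖y - L y‖ ^ 2 + ‖L y‖ ^ 2 = 1 := by
        have := hL.1.pyth y
        rw [hy] at this; simpa using this
      have hle := h L hL
      nlinarith [norm_nonneg (y - L y), norm_nonneg (x - L x)]
    have hOm : (1 : ℝ) ≤ omegaNorm (𝓐 : Set (H →L[ℂ] H)) x y := hInf.trans (hV x y)
    -- Step 2: extract a sequence of contractions with inner products tending to 1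
    have hSet_ne : {r : ℝ | ∃ T ∈ (𝓐 : Set (H →L[ℂ] H)), ‖T‖ ≤ 1 ∧
        r = ‖(⟪T x, y⟫ : ℂ)‖}.Nonempty := by
      refine ⟨_, 1, 𝓐.one_mem, ?_, rfl⟩
      rw [ContinuousLinearMap.one_def]
      exact ContinuousLinearMap.norm_id_le
    have hTn : ∀ n : ℕ, ∃ T ∈ (𝓐 : Set (H →L[ℂ] H)), ‖T‖ ≤ 1 ∧
        1 - 1 / (n + 1 : ℝ) < ‖(⟪T x, y⟫ : ℂ)‖ := by
      intro n
      have hpos : (0 : ℝ) < 1 / (n + 1 : ℝ) := by positivity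
      have hlt : 1 - 1 / (n + 1 : ℝ) < omegaNorm (𝓐 : Set (H →L[ℂ] H)) x y :=
        lt_of_lt_of_le (by linarith) hOm
      obtain ⟨r, hr, hrlt⟩ := exists_lt_of_lt_csSup hSet_ne hlt
      obtain ⟨T, hT1, hT2, rfl⟩ := hr
      exact ⟨T, hT1, hT2, hrlt⟩
    choose T hTmem hTle hTgt using hTn
    have hfrac : ∀ n : ℕ, (0 : ℝ) ≤ 1 - 1 / (n + 1 : ℝ) := by
      intro n
      have h1 : (1 : ℝ) ≤ (n + 1 : ℝ) := by exact_mod_cast Nat.one_le_iff_ne_zero.mpr (Nat.succ_ne_zero n)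
      have : 1 / (n + 1 : ℝ) ≤ 1 := by
        rw [div_le_one (by positivity)]; exact h1
      linarith
    have hane : ∀ n, (⟪T n x, y⟫ : ℂ) ≠ 0 := by
      intro n hcon
      have := hTgt n
      rw [hcon] at this
      simp at this
      have h5 := hfrac n
      rw [one_div] at h5
      linarith
    -- Step 3: rotate phases
    set c : ℕ → ℂ := fun n => (⟪T n x, y⟫ : ℂ) / (‖(⟪T n x, y⟫ : ℂ)‖ : ℂ) with hc_def
    have hcnorm : ∀ n, ‖c n‖ = 1 := by
      intro n
      rw [hc_def]
      simp only [norm_div, Complex.norm_real, Real.norm_eq_abs, abs_norm]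
      exact div_self (norm_ne_zero_iff.mpr (hane n))
    set A : ℕ → H →L[ℂ] H := fun n => c n • T n with hA_def
    have hAmem : ∀ n, A n ∈ (𝓐 : Set (H →L[ℂ] H)) := fun n => 𝓐.smul_mem (hTmem n) (c n)
    have hAle : ∀ n, ‖A n‖ ≤ 1 := by
      intro n
      rw [hA_def, norm_smul, hcnorm n, one_mul]
      exact hTle n
    have hAre : ∀ n, RCLike.re (⟪A n x, y⟫ : ℂ) = ‖(⟪T n x, y⟫ : ℂ)‖ := by
      intro n
      have hne : ‖(⟪T n x, y⟫ : ℂ)‖ ≠ 0 := norm_ne_zero_iff.mpr (hane n)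
      have h1 : (⟪A n x, y⟫ : ℂ)
          = ((Complex.normSq (⟪T n x, y⟫ : ℂ) / ‖(⟪T n x, y⟫ : ℂ)‖ : ℝ) : ℂ) := by
        simp only [hA_def, ContinuousLinearMap.smul_apply, inner_smul_left, hc_def,
          map_div₀, Complex.conj_ofReal]
        rw [div_mul_eq_mul_div, ← Complex.normSq_eq_conj_mul_self]
        push_cast
        ring
      rw [h1]
      rw [show RCLike.re (((Complex.normSq (⟪T n x, y⟫ : ℂ) / ‖(⟪T n x, y⟫ : ℂ)‖ : ℝ) : ℂ))
          = (Complex.normSq (⟪T n x, y⟫ : ℂ) / ‖(⟪T n x, y⟫ : ℂ)‖ : ℝ) from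
        Complex.ofReal_re _]
      rw [show Complex.normSq (⟪T n x, y⟫ : ℂ) = ‖(⟪T n x, y⟫ : ℂ)‖ ^ 2 by
        rw [Complex.normSq_eq_norm_sq]]
      rw [pow_two, mul_div_assoc, div_self hne, mul_one]
    -- Step 4: A n x → y in norm
    have hAx : Tendsto (fun n => A n x) atTop (𝓝 y) := by
      have hbound : ∀ n : ℕ, ‖A n x - y‖ ≤ Real.sqrt (2 / (n + 1 : ℝ)) := by
        intro n
        have hsq : ‖A n x - y‖ ^ 2 ≤ 2 / (n + 1 : ℝ) := by
          have hns := norm_sub_sq (𝕜 := ℂ) (A n x) y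
          have h1 : ‖A n x‖ ≤ 1 := by
            calc ‖A n x‖ ≤ ‖A n‖ * ‖x‖ := (A n).le_opNorm x
              _ ≤ 1 * 1 := mul_le_mul (hAle n) (le_of_eq hx) (norm_nonneg x)
                  zero_le_one
              _ = 1 := one_mul 1
          have h2 := hAre n
          have h3 := hTgt n
          rw [hns, h2, hy]
          have h4 : 2 / ((n : ℝ) + 1) = 2 * (1 / ((n : ℝ) + 1)) := by ring
          nlinarith [norm_nonneg (A n x)]
        calc ‖A n x - y‖ = Real.sqrt (‖A n x - y‖ ^ 2) := (Real.sqrt_sq (norm_nonneg _)).symm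
          _ ≤ Real.sqrt (2 / (n + 1 : ℝ)) := Real.sqrt_le_sqrt hsq
      have hg : Tendsto (fun n : ℕ => Real.sqrt (2 / (n + 1 : ℝ))) atTop (𝓝 0) := by
        have h1 : Tendsto (fun n : ℕ => (2 : ℝ) / (n + 1 : ℝ)) atTop (𝓝 0) := by
          have h2 := tendsto_one_div_add_atTop_nhds_zero_nat.const_mul (2 : ℝ)
          simpa [mul_one_div, div_eq_mul_inv] using h2
        have h2 : Tendsto Real.sqrt (𝓝 0) (𝓝 0) := by
          have := Real.continuous_sqrt.tendsto 0
          simpa using this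
        exact h2.comp h1
      have hz : Tendsto (fun n => A n x - y) atTop (𝓝 0) :=
        squeeze_zero_norm hbound hg
      simpa using hz.add (tendsto_const_nhds (x := y))
    -- Step 5: take a WOT ultrafilter limit
    set 𝒰 : Ultrafilter ℕ := Ultrafilter.of atTop with h𝒰
    obtain ⟨S, hSnorm, hStend⟩ := exists_wotLimit A hAle 𝒰
    have hUle : (𝒰 : Filter ℕ) ≤ atTop := Ultrafilter.of_le _
    have hSx : S x = y := by
      apply ext_inner_right ℂ
      intro v
      refine tendsto_nhds_unique (hStend x v) ?_
      exact (hAx.inner (tendsto_const_nhds (x := v))).mono_left hUle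
    have hSmem : S ∈ 𝓐 := by
      letI : TopologicalSpace (H →L[ℂ] H) := WOT H
      refine IsClosed.mem_of_tendsto (f := A) (b := (𝒰 : Filter ℕ)) hclosed ?_
        (Filter.Eventually.of_forall hAmem)
      have hnh : (𝓝 S : Filter (H →L[ℂ] H)) = Filter.comap
          (fun T : H →L[ℂ] H => fun p : H × H => (⟪T p.1, p.2⟫ : ℂ))
          (𝓝 (fun p : H × H => (⟪S p.1, p.2⟫ : ℂ))) := nhds_induced _ _
      rw [hnh, tendsto_comap_iff]
      exact tendsto_pi_nhds.mpr fun p => hStend p.1 p.2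
    exact ⟨S, hSmem, hSnorm, hSx⟩
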